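/- arXiv:2406.07469 — 5 statements merged into one kernel-verified Lean document; each statement's English description precedes it below -/
import Mathlib

section
/- cos(3π/7)/sin(π/7) − cos(π/7)/sin(2π/7) + cos(2π/7)/sin(3π/7) = 0. -/
open Real

theorem trig_identity_seven :
    Real.cos (3 * π / 7) / Real.sin (π / 7) - Real.cos (π / 7) / Real.sin (2 * π / 7) +
      Real.cos (2 * π / 7) / Real.sin (3 * π / 7) = 0 := by
  have hpi := Real.pi_pos
  set x : ℝ := π / 7 with hx
  set s : ℝ := Real.sin x with hsdef
  set c : ℝ := Real.cos x with hcdef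
  have hpyth : s ^ 2 + c ^ 2 = 1 := Real.sin_sq_add_cos_sq x
  -- key cubic for c
  have h4 : Real.cos (4 * x) = - Real.cos (3 * x) := by
    rw [show (4 : ℝ) * x = π - 3 * x by simp only [hx]; ring, Real.cos_pi_sub]
  have h3c : Real.cos (3 * x) = 4 * c ^ 3 - 3 * c := by
    rw [Real.cos_three_mul]; try ring
  have h4c : Real.cos (4 * x) = 8 * c ^ 4 - 8 * c ^ 2 + 1 := by
    rw [show (4 : ℝ) * x = 2 * (2 * x) by ring, Real.cos_two_mul, Real.cos_two_mul]; ring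
  have hcpos : 0 < c := by
    apply Real.cos_pos_of_mem_Ioo
    constructor <;> simp only [hx] <;> linarith
  have hcne : c ≠ -1 := by intro h; linarith
  have hP : 8 * c ^ 3 - 4 * c ^ 2 - 4 * c + 1 = 0 := by
    have h : (c + 1) * (8 * c ^ 3 - 4 * c ^ 2 - 4 * c + 1) = 0 := by
      have := h4; rw [h4c, h3c] at this; linarith [this]
    rcases mul_eq_zero.mp h with h | h
    · exact absurd (by linarith) hcne
    · exact h
  -- sines
  have h2s : Real.sin (2 * x) = 2 * s * c := by rw [Real.sin_two_mul]
  have h3s : Real.sin (3 * x) = 3 * s - 4 * s ^ 3 := by rw [Real.sin_three_mul]; try ring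
  have h2c : Real.cos (2 * x) = 2 * c ^ 2 - 1 := by rw [Real.cos_two_mul]; try ring
  have hs1 : 0 < s := Real.sin_pos_of_pos_of_lt_pi (by positivity) (by simp only [hx]; try linarith)
  have hs2 : 0 < Real.sin (2 * x) :=
    Real.sin_pos_of_pos_of_lt_pi (by positivity) (by simp only [hx]; try linarith)
  have hs3 : 0 < Real.sin (3 * x) :=
    Real.sin_pos_of_pos_of_lt_pi (by positivity) (by simp only [hx]; try linarith)
  have e2 : (2 : ℝ) * π / 7 = 2 * x := by simp only [hx]; ring
  have e3 : (3 : ℝ) * π / 7 = 3 * x := by simp only [hx]; ring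
  rw [e2, e3, h2s, h3s, h2c, h3c]
  rw [h2s] at hs2
  rw [h3s] at hs3
  have h3' : (3:ℝ) - 4 * s ^ 2 ≠ 0 := by
    intro h; have : 3 * s - 4 * s ^ 3 = s * (3 - 4 * s ^ 2) := by ring
    rw [this, h] at hs3; simp at hs3
  field_simp
  linear_combination (4*c^2+2*c-1) * hP - 4*(8*c^3-6*c-1) * hpyth
end

section
/- cos(π/7)/sin(π/7) + cos(2π/7)/sin(2π/7) − cos(3π/7)/sin(3π/7) = √7. -/
open Real

theorem trig_identity_sqrt_seven :
    Real.cos (π / 7) / Real.sin (π / 7) + Real.cos (2 * π / 7) / Real.sin (2 * π / 7) -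
      Real.cos (3 * π / 7) / Real.sin (3 * π / 7) = Real.sqrt 7 := by
  have hpi : (0:ℝ) < π := Real.pi_pos
  set t : ℝ := π / 7 with ht
  set c : ℝ := Real.cos t with hcdef
  set s : ℝ := Real.sin t with hsdef
  have ht0 : 0 < t := by positivity
  have htpi : t < π := by rw [ht]; linarith
  have hs_pos : 0 < s := Real.sin_pos_of_pos_of_lt_pi ht0 htpi
  have hc_half : 1/2 < c := by
    have h := Real.cos_lt_cos_of_nonneg_of_le_pi (by positivity : (0:ℝ) ≤ t)
      (by linarith : π/3 ≤ π) (by rw [ht]; linarith : t < π/3)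
    rw [Real.cos_pi_div_three] at h
    linarith
  have hc_pos : 0 < c := by linarith
  have hs2 : s^2 = 1 - c^2 := Real.sin_sq t
  have c2 : Real.cos (2*t) = 2*c^2 - 1 := by
    rw [Real.cos_two_mul]
  have s2 : Real.sin (2*t) = 2*s*c := by
    rw [Real.sin_two_mul]
  have c3 : Real.cos (3*t) = 4*c^3 - 3*c := Real.cos_three_mul t
  have s3 : Real.sin (3*t) = s*(4*c^2 - 1) := by
    rw [Real.sin_three_mul]
    linear_combination (-4*s) * hs2
  have c4 : Real.cos (4*t) = 2*(2*c^2-1)^2 - 1 := by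
    rw [show (4:ℝ)*t = 2*(2*t) by ring, Real.cos_two_mul, c2]
  have s4 : Real.sin (4*t) = 2*(2*s*c)*(2*c^2-1) := by
    rw [show (4:ℝ)*t = 2*(2*t) by ring, Real.sin_two_mul, s2, c2]
  have h7 : Real.cos (4*t + 3*t) = -1 := by
    rw [show 4*t + 3*t = π by rw [ht]; ring, Real.cos_pi]
  rw [Real.cos_add] at h7
  rw [c4, s4, c3, s3] at h7
  have hmin2 : (c+1)*(8*c^3 - 4*c^2 - 4*c + 1)^2 = 0 := by
    linear_combination h7 + (4*c*(2*c^2-1)*(4*c^2-1)) * hs2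
  have hmin : 8*c^3 - 4*c^2 - 4*c + 1 = 0 := by
    have hc1 : c + 1 ≠ 0 := by positivity
    have hsq0 : (8*c^3 - 4*c^2 - 4*c + 1)^2 = 0 := by
      rcases mul_eq_zero.mp hmin2 with h | h
      · exact absurd h hc1
      · exact h
    exact pow_eq_zero_iff (by norm_num) |>.mp hsq0
  have h4c : 0 < 4*c^2 - 1 := by nlinarith
  have hs3ne : s*(4*c^2-1) ≠ 0 := by positivity
  have hs2ne : 2*s*c ≠ 0 := by positivity
  have hsne : s ≠ 0 := ne_of_gt hs_pos
  have key : c/s + (2*c^2-1)/(2*s*c) - (4*c^3-3*c)/(s*(4*c^2-1))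
      = (8*c^4 - 2*c^2 + 1)/(2*s*c*(4*c^2-1)) := by
    rw [div_add_div _ _ hsne hs2ne, div_sub_div _ _ (mul_ne_zero hsne hs2ne) hs3ne,
      div_eq_div_iff (mul_ne_zero (mul_ne_zero hsne hs2ne) hs3ne) (by positivity)]
    ring
  have hD : 0 < 2*s*c*(4*c^2-1) := by positivity
  have hN : 0 < 8*c^4 - 2*c^2 + 1 := by nlinarith [sq_nonneg (c^2 - 1/8)]
  have hfrac : 0 ≤ (8*c^4 - 2*c^2 + 1)/(2*s*c*(4*c^2-1)) := by positivity
  have hsq7 : ((8*c^4 - 2*c^2 + 1)/(2*s*c*(4*c^2-1)))^2 = 7 := by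
    rw [div_pow, div_eq_iff (by positivity)]
    linear_combination (64*c^5+32*c^4-40*c^3-12*c^2+4*c+1) * hmin
      + (-28*c^2*(4*c^2-1)^2) * hs2
  have e2 : 2 * π / 7 = 2*t := by rw [ht]; ring
  have e3 : 3 * π / 7 = 3*t := by rw [ht]; ring
  rw [e2, e3, c2, s2, c3, s3, key, show (7:ℝ) = ((8*c^4 - 2*c^2 + 1)/(2*s*c*(4*c^2-1)))^2 from hsq7.symm,
    Real.sqrt_sq hfrac]
end

section
/- Let c > 0 and gcd(d,c) = 1, and let θ = gcd(c,3). Then 2θ·c·s(d,c) is an integer, where s(d,c) = Σ_{r mod c} ((r/c))((dr/c)) is the Dedekind sum, and ((x)) denotes x − ⌊x⌋ − 1/2 for x ∉ ℤ and 0 for x ∈ ℤ. -/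
open Real

/-- The sawtooth function `((x))`. -/
noncomputable def saw (x : ℝ) : ℝ :=
  if Int.fract x = 0 then 0 else x - ⌊x⌋ - 1 / 2

/-- The Dedekind sum `s(d, c) = ∑_{r mod c} ((r/c)) ((dr/c))`. -/
noncomputable def dedekindSum (d c : ℤ) : ℝ :=
  ∑ r ∈ Finset.range c.toNat, saw ((r : ℝ) / (c : ℝ)) * saw ((d : ℝ) * (r : ℝ) / (c : ℝ))

lemma six_sum_sq (n : ℕ) :
    6 * ∑ r ∈ Finset.range n, (r : ℤ)^2 = ((n:ℤ)-1)*(n:ℤ)*(2*(n:ℤ)-1) := by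
  induction n with
  | zero => simp
  | succ n ih =>
    rw [Finset.sum_range_succ, mul_add, ih]
    push_cast
    ring

lemma saw_of_fract_ne (x : ℝ) (h : Int.fract x ≠ 0) : saw x = Int.fract x - 1/2 := by
  rw [saw, if_neg h, Int.fract]

theorem two_theta_c_dedekindSum_isInt (d c : ℤ) (hc : 0 < c) (hdc : Int.gcd d c = 1) :
    ∃ k : ℤ, ((2 * Int.gcd c 3 * c : ℤ) : ℝ) * dedekindSum d c = (k : ℝ) := by
  set n := c.toNat with hn
  have hcn : ((n : ℤ)) = c := Int.toNat_of_nonneg hc.le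
  have hn0 : 0 < n := by omega
  set θ : ℤ := (Int.gcd c 3 : ℤ) with hθ
  set m : ℕ → ℤ := fun r => (d * r) % c with hm
  set q : ℕ → ℤ := fun r => (d * r) / c with hq
  set g : ℕ → ℤ := fun r => if r = 0 then 0 else (2*r - c)*(2*(m r) - c) with hg
  set A : ℤ := ∑ r ∈ Finset.range n, g r with hA
  -- real side: dedekindSum = A / (4 c^2)
  have hcr : (0:ℝ) < (c:ℝ) := by exact_mod_cast hc
  have hterm : ∀ r ∈ Finset.range n,
      saw ((r : ℝ) / (c : ℝ)) * saw ((d : ℝ) * (r : ℝ) / (c : ℝ))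
        = (g r : ℝ) / (4 * (c:ℝ)^2) := by
    intro r hr
    rw [Finset.mem_range] at hr
    by_cases hr0 : r = 0
    · subst hr0
      simp [saw, g]
    · have hrc : (r : ℤ) < c := by omega
      have hrpos : 0 < r := Nat.pos_of_ne_zero hr0
      -- first factor
      have hf1 : Int.fract ((r : ℝ) / (c : ℝ)) = (r : ℝ) / (c : ℝ) := by
        refine Int.fract_eq_self.mpr ⟨by positivity, ?_⟩
        rw [div_lt_one hcr]
        exact_mod_cast hrc
      have hne1 : Int.fract ((r : ℝ) / (c : ℝ)) ≠ 0 := by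
        rw [hf1]
        have : (0:ℝ) < (r:ℝ) := by exact_mod_cast hrpos
        positivity
      -- second factor
      have hncR : ((n : ℕ) : ℝ) = (c : ℝ) := by exact_mod_cast congrArg (fun z : ℤ => (z : ℝ)) hcn
      have hcast : (d : ℝ) * (r : ℝ) / (c : ℝ) = ((d * (r:ℤ) : ℤ) : ℝ) / ((n : ℕ) : ℝ) := by
        rw [hncR]
        push_cast
        ring
      have hf2 : Int.fract ((d : ℝ) * (r : ℝ) / (c : ℝ)) = ((m r : ℤ) : ℝ) / (c : ℝ) := by
        rw [hcast, Int.fract_div_intCast_eq_div_intCast_mod, hncR, hcn]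
      have hmne : m r ≠ 0 := by
        intro h0
        have hdvd : c ∣ d * r := Int.dvd_of_emod_eq_zero h0
        have hcop : IsCoprime (c : ℤ) d := by
          rw [Int.isCoprime_iff_gcd_eq_one, Int.gcd_comm]
          exact hdc
        have : c ∣ (r : ℤ) := hcop.dvd_of_dvd_mul_left hdvd
        have := Int.le_of_dvd (by exact_mod_cast hrpos) this
        omega
      have hne2 : Int.fract ((d : ℝ) * (r : ℝ) / (c : ℝ)) ≠ 0 := by
        rw [hf2]
        have : ((m r : ℤ) : ℝ) ≠ 0 := by exact_mod_cast hmne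
        positivity
      rw [saw_of_fract_ne _ hne1, saw_of_fract_ne _ hne2, hf1, hf2, hg]
      simp only [if_neg hr0]
      push_cast
      field_simp
      ring
  have hded : dedekindSum d c = (A : ℝ) / (4 * (c:ℝ)^2) := by
    rw [dedekindSum, ← hn, Finset.sum_congr rfl hterm, hA]
    push_cast
    rw [Finset.sum_div]
  -- integer side
  set S : ℤ := ∑ r ∈ Finset.range n, (r : ℤ)^2 with hS
  set U : ℤ := ∑ r ∈ Finset.range n, (2*(r:ℤ)*(q r) + m r + (r:ℤ)) with hU
  have hmdef : ∀ r : ℕ, m r = d * r - c * q r := fun r => Int.emod_def _ _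
  have hAeq : A = 4*d*S - 2*c*U + c^2*(c-1) := by
    have h1 : ∀ r ∈ Finset.range n,
        g r = (4*d*(r:ℤ)^2 - 2*c*(2*(r:ℤ)*(q r) + m r + (r:ℤ)) + c^2)
              - (if r = 0 then c^2 else 0) := by
      intro r _
      by_cases hr0 : r = 0
      · subst hr0
        have : m 0 = 0 := by simp [hm]
        have hq0 : q 0 = 0 := by simp [hq]
        simp [hg, this, hq0]
      · rw [hg]
        simp only [if_neg hr0]
        rw [hmdef r]
        ring
    rw [hA, Finset.sum_congr rfl h1, Finset.sum_sub_distrib, Finset.sum_add_distrib,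
      Finset.sum_sub_distrib, ← Finset.mul_sum, ← Finset.mul_sum, Finset.sum_const,
      Finset.sum_ite_eq' (Finset.range n) 0 (fun _ => (c^2 : ℤ))]
    simp only [Finset.mem_range, hn0, if_pos, Finset.card_range, nsmul_eq_mul, hcn]
    rw [← hS, ← hU]
    ring
  -- 3 ∣ θ * (c-1) * (2c-1)
  have hθu : ∃ u : ℤ, θ * ((c-1)*(2*c-1)) = 3 * u := by
    have h3 : c % 3 = 0 ∨ c % 3 = 1 ∨ c % 3 = 2 := by omega
    rcases h3 with h | h | h
    · have hd3 : (3:ℤ) ∣ c := Int.dvd_of_emod_eq_zero h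
      have : (3:ℤ) ∣ θ := Int.dvd_coe_gcd hd3 dvd_rfl
      obtain ⟨v, hv⟩ := this
      exact ⟨v * ((c-1)*(2*c-1)), by rw [hv]; ring⟩
    · obtain ⟨t, ht⟩ : ∃ t, c = 3*t + 1 := ⟨c / 3, by omega⟩
      exact ⟨θ * t * (2*c-1), by rw [ht]; ring⟩
    · obtain ⟨t, ht⟩ : ∃ t, c = 3*t + 2 := ⟨c / 3, by omega⟩
      exact ⟨θ * (c-1) * (2*t+1), by rw [ht]; ring⟩
  obtain ⟨u, hu⟩ := hθu
  have hSsq : 6 * S = (c-1)*c*(2*c-1) := by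
    rw [hS, six_sum_sq, hcn]
  -- 2c ∣ θ * A
  have hd1 : θ * (4*d*S) = 2*c*(d*u) := by
    have h6 : 6 * (θ * (4*d*S)) = 6 * (2*c*(d*u)) := by
      linear_combination (4*d*θ) * hSsq + (4*d*c) * hu
    exact mul_left_cancel₀ (by norm_num : (6:ℤ) ≠ 0) h6
  have hd3 : ∃ e : ℤ, θ * (c^2*(c-1)) = 2*c*(θ*e) := by
    obtain ⟨e, he⟩ := Int.even_mul_succ_self (c-1)
    refine ⟨e, ?_⟩
    have : (c-1)*c = 2*e := by linear_combination he
    linear_combination θ * c * this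
  obtain ⟨e, he⟩ := hd3
  refine ⟨d*u - θ*U + θ*e, ?_⟩
  have hk : θ * A = 2*c*(d*u - θ*U + θ*e) := by
    rw [hAeq]
    linear_combination hd1 + he
  rw [hded]
  have hkR : (θ:ℝ) * (A:ℝ) = 2*(c:ℝ)*((d*u - θ*U + θ*e : ℤ) : ℝ) := by
    exact_mod_cast congrArg (fun z : ℤ => (z:ℝ)) hk
  push_cast at hkR ⊢
  field_simp
  linear_combination 2*hkR
end

section
/- Let c > 0 be an integer with gcd(d,c) = 1 and let θ = gcd(c,3). Then 12·c·s(d,c) ≡ d + d* (mod θc), where d* is an inverse of d modulo θc. -/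
open Real

lemma saw_eq (x : ℝ) : saw x = if Int.fract x = 0 then 0 else Int.fract x - 1/2 := by
  unfold saw Int.fract
  split <;> ring

lemma sum_sq_formula (n : ℕ) :
    6 * ∑ r ∈ Finset.range n, (r : ℤ)^2 = n * (n - 1) * (2 * n - 1) := by
  induction n with
  | zero => simp
  | succ m ih =>
    rw [Finset.sum_range_succ]
    push_cast
    push_cast at ih
    linear_combination ih

lemma sum_id_formula (n : ℕ) :
    2 * ∑ r ∈ Finset.range n, (r : ℤ) = n * (n - 1) := by
  induction n with
  | zero => simp
  | succ m ih =>
    rw [Finset.sum_range_succ]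
    push_cast
    push_cast at ih
    linear_combination ih

lemma key_mod (c : ℤ) (hc : 0 < c) (x y : ℤ) (hxy : x * y ≡ 1 [ZMOD c])
    (r : ℕ) (hr : r < c.toNat) : (x * ((y * r) % c)) % c = r := by
  have h1 : x * ((y * r) % c) ≡ x * (y * r) [ZMOD c] :=
    Int.ModEq.mul_left x (Int.emod_emod_of_dvd _ dvd_rfl)
  have h2 : x * (y * r) ≡ 1 * r [ZMOD c] := by
    have : x * (y * r) = (x * y) * r := by ring
    rw [this]
    exact hxy.mul_right r
  have h3 : x * ((y * r) % c) ≡ r [ZMOD c] := by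
    simpa using h1.trans h2
  have h4 : (r : ℤ) % c = r := Int.emod_eq_of_lt (by positivity) (by omega)
  calc (x * ((y * r) % c)) % c = (r : ℤ) % c := h3
    _ = r := h4

lemma sum_perm {M : Type*} [AddCommMonoid M] (d e c : ℤ) (hc : 0 < c)
    (hde : d * e ≡ 1 [ZMOD c]) (g : ℤ → M) :
    ∑ r ∈ Finset.range c.toNat, g ((d * r) % c) = ∑ r ∈ Finset.range c.toNat, g (r : ℤ) := by
  have hed : e * d ≡ 1 [ZMOD c] := by rwa [mul_comm] at hde
  have memod : ∀ a : ℤ, 0 ≤ a % c ∧ a % c < c := fun a =>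
    ⟨Int.emod_nonneg a hc.ne', Int.emod_lt_of_pos a hc⟩
  refine Finset.sum_nbij' (fun r => ((d * r) % c).toNat) (fun r => ((e * r) % c).toNat) ?_ ?_ ?_ ?_ ?_
  · intro a ha
    simp only [Finset.mem_range] at *
    have := memod (d * a)
    omega
  · intro a ha
    simp only [Finset.mem_range] at *
    have := memod (e * a)
    omega
  · intro a ha
    simp only [Finset.mem_range] at ha
    have h0 := (memod (d * a)).1
    simp only [Int.toNat_of_nonneg h0]
    have := key_mod c hc e d hed a ha
    omega
  · intro a ha
    simp only [Finset.mem_range] at ha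
    have h0 := (memod (e * a)).1
    simp only [Int.toNat_of_nonneg h0]
    have := key_mod c hc d e hde a ha
    omega
  · intro a ha
    rw [Int.toNat_of_nonneg (memod (d * a)).1]

theorem twelve_c_dedekindSum_congr (d c : ℤ) (hc : 0 < c) (hdc : Int.gcd d c = 1)
    (dstar : ℤ) (hstar : d * dstar ≡ 1 [ZMOD (Int.gcd c 3 * c)]) :
    ∃ k : ℤ, ((12 * c : ℤ) : ℝ) * dedekindSum d c = (k : ℝ) ∧
      k ≡ d + dstar [ZMOD (Int.gcd c 3 * c)] := by
  set n := c.toNat with hn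
  have hcn : (n : ℤ) = c := Int.toNat_of_nonneg hc.le
  have hn0 : 0 < n := by omega
  set f : ℕ → ℤ := fun r => (d * r) % c with hf
  set q : ℕ → ℤ := fun r => (d * r) / c with hq
  set A := ∑ r ∈ Finset.range n, (r : ℤ)^2 with hA
  set B := ∑ r ∈ Finset.range n, (f r)^2 with hB
  set T := ∑ r ∈ Finset.range n, (r : ℤ) * f r with hT
  set Q := ∑ r ∈ Finset.range n, (q r)^2 with hQ
  -- dstar is an inverse mod c
  have hdvdN : c ∣ (Int.gcd c 3 : ℤ) * c := dvd_mul_left c _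
  have hstarc : d * dstar ≡ 1 [ZMOD c] := hstar.of_dvd hdvdN
  -- permutation sums
  have hBA : B = A := sum_perm d dstar c hc hstarc (fun x => x^2)
  have hfsum : (∑ r ∈ Finset.range n, f r) = ∑ r ∈ Finset.range n, (r : ℤ) :=
    sum_perm d dstar c hc hstarc id
  -- key algebraic identity
  have hL3 : d^2 * A - 2 * d * T + B = c^2 * Q := by
    rw [hA, hB, hT, hQ, Finset.mul_sum, Finset.mul_sum, Finset.mul_sum,
      ← Finset.sum_sub_distrib, ← Finset.sum_add_distrib]
    apply Finset.sum_congr rfl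
    intro r _
    have h := Int.mul_ediv_add_emod (d * r) c
    have hfq : c * q r + f r = d * r := h
    linear_combination (f r - d * r - c * q r) * hfq
  have h6A : 6 * A = c * (c - 1) * (2 * c - 1) := by
    rw [hA, sum_sq_formula n, hcn]
  have h12T : 12 * d * T = (d^2 + 1) * (c * (c - 1) * (2 * c - 1)) - 6 * c^2 * Q := by
    linear_combination (-6) * hL3 + (d^2 + 1) * h6A + 6 * hBA
  -- c divides 12 T
  have hcop : IsCoprime c d := by
    rw [Int.isCoprime_iff_gcd_eq_one, Int.gcd_comm]
    exact hdc
  have hdvd : c ∣ d * (12 * T) := by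
    refine ⟨(d^2 + 1) * ((c - 1) * (2 * c - 1)) - 6 * c * Q, by linear_combination h12T⟩
  obtain ⟨T', hT'⟩ := hcop.dvd_of_dvd_mul_left hdvd
  set k : ℤ := T' - 3 * c * (c - 1) with hk
  have hck : c * k = 12 * T - 3 * c^2 * (c - 1) := by
    rw [hk]; linear_combination (-1 : ℤ) * hT'
  -- exact formula for d * k
  have hdk : d * k = (d^2 + 1) * ((c - 1) * (2 * c - 1)) - 6 * c * Q - 3 * c * (c - 1) * d := by
    have hcancel : c * (d * k) =
        c * ((d^2 + 1) * ((c - 1) * (2 * c - 1)) - 6 * c * Q - 3 * c * (c - 1) * d) := by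
      linear_combination d * hck + h12T
    exact mul_left_cancel₀ hc.ne' hcancel
  -- the congruence
  set N : ℤ := (Int.gcd c 3 : ℤ) * c with hN
  obtain ⟨u, hu⟩ : (Int.gcd c 3 : ℤ) ∣ 3 := Int.ofNat_dvd_right.mpr (Nat.gcd_dvd_right _ _)
  obtain ⟨v, hv⟩ : (Int.gcd c 3 : ℤ) ∣ c := Int.gcd_dvd_left _ _
  have hdkc : d * k ≡ d^2 + 1 [ZMOD N] := by
    rw [Int.modEq_iff_dvd]
    refine ⟨-((d^2 + 1) * (2 * v - u) - 2 * u * Q - u * (c - 1) * d), ?_⟩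
    rw [hN]
    linear_combination (-1 : ℤ) * hdk - 2 * c * (d^2 + 1) * hv + ((d^2 + 1) * c + 2 * c * Q + c * (c - 1) * d) * hu
  have hkcong : k ≡ d + dstar [ZMOD N] := by
    calc k = 1 * k := by ring
      _ ≡ (d * dstar) * k [ZMOD N] := (hstar.symm.mul_right k)
      _ = dstar * (d * k) := by ring
      _ ≡ dstar * (d^2 + 1) [ZMOD N] := hdkc.mul_left dstar
      _ = d * (d * dstar) + dstar := by ring
      _ ≡ d * 1 + dstar [ZMOD N] := ((hstar.mul_left d).add_right dstar)
      _ = d + dstar := by ring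
  refine ⟨k, ?_, hkcong⟩
  -- the real computation
  have hcR : (c : ℝ) ≠ 0 := by exact_mod_cast hc.ne'
  have hterm : ∀ r ∈ Finset.range n,
      ((12 * c : ℤ) : ℝ) * (saw ((r : ℝ) / c) * saw ((d : ℝ) * r / c)) =
        (12 * (r : ℝ) * ((f r : ℤ) : ℝ) / c - 6 * r - 6 * ((f r : ℤ) : ℝ) + 3 * c)
          - (if r = 0 then 3 * (c : ℝ) else 0) := by
    intro r hr
    simp only [Finset.mem_range] at hr
    rcases Nat.eq_zero_or_pos r with h0 | h0
    · subst h0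
      have hf0 : f 0 = 0 := by simp [hf]
      have : saw ((0 : ℕ) / (c : ℝ)) = 0 := by
        simp [saw_eq]
      rw [this]
      simp [hf0]
    · -- r ≥ 1
      have hrc : (r : ℝ) / c ∈ Set.Ico (0 : ℝ) 1 := by
        constructor
        · positivity
        · rw [div_lt_one (by exact_mod_cast hc)]
          exact_mod_cast (by omega : (r : ℤ) < c)
      have hfr1 : Int.fract ((r : ℝ) / c) = (r : ℝ) / c := Int.fract_eq_self.mpr ⟨hrc.1, hrc.2⟩
      have hfrne : (r : ℝ) / c ≠ 0 := by
        apply div_ne_zero _ hcR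
        exact_mod_cast h0.ne'
      have hsaw1 : saw ((r : ℝ) / c) = (r : ℝ) / c - 1/2 := by
        rw [saw_eq, hfr1, if_neg hfrne]
      -- second factor
      have hfq : c * q r + f r = d * r := Int.mul_ediv_add_emod (d * r) c
      have hfrac2 : Int.fract ((d : ℝ) * r / c) = ((f r : ℤ) : ℝ) / c := by
        have hfqR : (c : ℝ) * ((q r : ℤ) : ℝ) + ((f r : ℤ) : ℝ) = (d : ℝ) * (r : ℝ) := by
          exact_mod_cast congrArg (fun z : ℤ => (z : ℝ)) hfq
        have hrepr : (d : ℝ) * r / c = (q r : ℝ) + ((f r : ℤ) : ℝ) / c := by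
          field_simp
          linear_combination (-1 : ℝ) * hfqR
        rw [hrepr, Int.fract_intCast_add, Int.fract_eq_self.mpr]
        constructor
        · have := Int.emod_nonneg (d * r) hc.ne'
          positivity
        · rw [div_lt_one (by exact_mod_cast hc)]
          exact_mod_cast Int.emod_lt_of_pos (d * r) hc
      have hfne : f r ≠ 0 := by
        intro h
        have hdvd' : c ∣ d * r := Int.dvd_of_emod_eq_zero h
        have : c ∣ (r : ℤ) := hcop.dvd_of_dvd_mul_left hdvd'
        have := Int.le_of_dvd (by exact_mod_cast h0) this
        omega
      have hfneR : ((f r : ℤ) : ℝ) / c ≠ 0 := by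
        apply div_ne_zero _ hcR
        exact_mod_cast hfne
      have hsaw2 : saw ((d : ℝ) * r / c) = ((f r : ℤ) : ℝ) / c - 1/2 := by
        rw [saw_eq, hfrac2, if_neg hfneR]
      rw [hsaw1, hsaw2, if_neg h0.ne']
      push_cast
      field_simp
      ring
  have hsum := Finset.sum_congr rfl hterm
  rw [← Finset.mul_sum] at hsum
  rw [show (dedekindSum d c) = ∑ r ∈ Finset.range n,
      saw ((r : ℝ) / c) * saw ((d : ℝ) * r / c) from rfl, hsum]
  rw [Finset.sum_sub_distrib, Finset.sum_ite_eq' (Finset.range n) 0 (fun _ => 3 * (c : ℝ)),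
    if_pos (Finset.mem_range.mpr hn0)]
  -- now compute the big sum
  have hsum1 : (∑ r ∈ Finset.range n,
      (12 * (r : ℝ) * ((f r : ℤ) : ℝ) / c - 6 * r - 6 * ((f r : ℤ) : ℝ) + 3 * c))
      = 12 * ((T : ℤ) : ℝ) / c - 12 * (((∑ r ∈ Finset.range n, (r : ℤ)) : ℤ) : ℝ) + 3 * c * n := by
    rw [Finset.sum_add_distrib, Finset.sum_sub_distrib, Finset.sum_sub_distrib]
    have e1 : (∑ r ∈ Finset.range n, 12 * (r : ℝ) * ((f r : ℤ) : ℝ) / c)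
        = 12 * ((T : ℤ) : ℝ) / c := by
      rw [hT]
      push_cast
      rw [Finset.mul_sum, Finset.sum_div]
      apply Finset.sum_congr rfl
      intro r _
      ring
    have e2 : (∑ r ∈ Finset.range n, (6 : ℝ) * r)
        = 6 * (((∑ r ∈ Finset.range n, (r : ℤ)) : ℤ) : ℝ) := by
      push_cast
      rw [Finset.mul_sum]
    have e3 : (∑ r ∈ Finset.range n, (6 : ℝ) * ((f r : ℤ) : ℝ))
        = 6 * (((∑ r ∈ Finset.range n, (r : ℤ)) : ℤ) : ℝ) := by
      rw [← hfsum]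
      push_cast
      rw [Finset.mul_sum]
    rw [e1, e2, e3, Finset.sum_const, Finset.card_range, nsmul_eq_mul]
    ring
  rw [hsum1]
  have hsumid : 2 * (∑ r ∈ Finset.range n, (r : ℤ)) = c * (c - 1) := by
    rw [sum_id_formula n, hcn]
  have hckR : (c : ℝ) * k = 12 * ((T : ℤ) : ℝ) - 3 * (c : ℝ)^2 * (c - 1) := by
    exact_mod_cast congrArg (fun z : ℤ => (z : ℝ)) hck
  have hsumidR : 2 * (((∑ r ∈ Finset.range n, (r : ℤ)) : ℤ) : ℝ) = c * (c - 1) := by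
    exact_mod_cast congrArg (fun z : ℤ => (z : ℝ)) hsumid
  have hnR : ((n : ℤ) : ℝ) = (c : ℝ) := by exact_mod_cast hcn
  have hnR' : (n : ℝ) = (c : ℝ) := by exact_mod_cast hnR
  rw [hnR']
  have hgoal : 12 * ((T : ℤ) : ℝ) / c = (k : ℝ) + 3 * c * (c - 1) := by
    rw [div_eq_iff hcR]
    linear_combination (-1 : ℝ) * hckR
  rw [hgoal]
  linear_combination (-6 : ℝ) * hsumidR
end

section
/- Let c > 0 be odd with gcd(d,c) = 1. Then 12·c·s(d,c) ≡ c + 1 − 2·(d/c) (mod 8), where (d/c) is the Jacobi symbol. -/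
open Real

namespace DedAux
open Finset Nat



/-- number of lattice points version -/
theorem sum_Ico_eq_card_lt {p q : ℕ} :
    ∑ a ∈ Ico 1 (p / 2).succ, a * q / p =
      #{x ∈ Ico 1 (p / 2).succ ×ˢ Ico 1 (q / 2).succ | x.2 * p ≤ x.1 * q} :=
  if hp0 : p = 0 then by simp [hp0, Finset.ext_iff]
  else
    calc
      ∑ a ∈ Ico 1 (p / 2).succ, a * q / p =
          ∑ a ∈ Ico 1 (p / 2).succ, #{x ∈ Ico 1 (q / 2).succ | x * p ≤ a * q} :=
        Finset.sum_congr rfl fun x hx => ZMod.div_eq_filter_card (Nat.pos_of_ne_zero hp0) <|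
          calc
            x * q / p ≤ p / 2 * q / p := by have := le_of_lt_succ (mem_Ico.mp hx).2; gcongr
            _ ≤ _ := Nat.div_mul_div_le_div _ _ _
      _ = _ := by
        rw [← card_sigma]
        exact card_nbij' (fun a ↦ ⟨a.1, a.2⟩) (fun a ↦ ⟨a.1, a.2⟩)
          (by simp +contextual only [Set.MapsTo, mem_coe, mem_filter, mem_sigma, and_self_iff,
            forall_true_iff, mem_product])
          (by simp +contextual only [Set.MapsTo, mem_coe, mem_filter, mem_sigma, and_self_iff,
            forall_true_iff, mem_product]) (fun _ _ ↦ rfl) (fun _ _ ↦ rfl)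

theorem lattice_rec (p q : ℕ) (hp : 0 < p) (hq : 0 < q) (hpq : Nat.Coprime p q) :
    ∑ a ∈ Ico 1 (p / 2).succ, a * q / p + ∑ a ∈ Ico 1 (q / 2).succ, a * p / q =
      p / 2 * (q / 2) := by
  have hswap :
    #{x ∈ Ico 1 (q / 2).succ ×ˢ Ico 1 (p / 2).succ | x.2 * q ≤ x.1 * p} =
      #{x ∈ Ico 1 (p / 2).succ ×ˢ Ico 1 (q / 2).succ | x.1 * q ≤ x.2 * p} :=
    card_equiv (Equiv.prodComm _ _)
      (fun ⟨_, _⟩ => by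
        simp +contextual only [mem_filter, and_self_iff, Prod.swap_prod_mk,
          forall_true_iff, mem_product, Equiv.prodComm_apply, and_assoc, _root_.and_left_comm])
  have hdisj :
    Disjoint {x ∈ Ico 1 (p / 2).succ ×ˢ Ico 1 (q / 2).succ | x.2 * p ≤ x.1 * q}
      {x ∈ Ico 1 (p / 2).succ ×ˢ Ico 1 (q / 2).succ | x.1 * q ≤ x.2 * p} := by
    apply disjoint_filter.2 fun x hx hpq2 hqp => ?_
    have hx1 : 1 ≤ x.1 ∧ x.1 ≤ p / 2 ∧ 1 ≤ x.2 ∧ x.2 ≤ q / 2 := by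
      simp only [mem_product, mem_Ico, Nat.lt_succ_iff] at hx
      exact ⟨hx.1.1, hx.1.2, hx.2.1, hx.2.2⟩
    have heq : x.2 * p = x.1 * q := le_antisymm hpq2 hqp
    -- p ∣ x.1 * q, coprime p q so p ∣ x.1, but 0 < x.1 ≤ p/2 < p
    have hdvd : p ∣ x.1 := by
      have : p ∣ x.1 * q := ⟨x.2, by rw [← heq]; ring⟩
      exact (Nat.Coprime.dvd_of_dvd_mul_right hpq this)
    have : p ≤ x.1 := Nat.le_of_dvd (by omega) hdvd
    have : x.1 ≤ p / 2 := hx1.2.1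
    omega
  have hunion :
    {x ∈ Ico 1 (p / 2).succ ×ˢ Ico 1 (q / 2).succ | x.2 * p ≤ x.1 * q} ∪
        {x ∈ Ico 1 (p / 2).succ ×ˢ Ico 1 (q / 2).succ | x.1 * q ≤ x.2 * p} =
      Ico 1 (p / 2).succ ×ˢ Ico 1 (q / 2).succ :=
    Finset.ext fun x => by
      have := le_total (x.2 * p) (x.1 * q)
      simp only [mem_union, mem_filter]; tauto
  rw [sum_Ico_eq_card_lt, sum_Ico_eq_card_lt, hswap, ← card_union_of_disjoint hdisj, hunion,
    card_product, card_Ico]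
  simp


def Ei (m c : ℕ) : ℕ := ∑ a ∈ Finset.Ico 1 (c / 2 + 1), a * m / c

theorem flip_term {c m a : ℕ} (hc : 0 < c) (hm2 : m < 2 * c)
    (hs : ¬ c ∣ a * m) (ha : 0 < a) : a * (2 * c - m) / c + a * m / c + 1 = 2 * a := by
  set q := a * m / c with hq
  set s := a * m % c with hsdef
  have hqs : c * q + s = a * m := Nat.div_add_mod _ _
  have hs0 : s ≠ 0 := fun h => hs (Nat.dvd_of_mod_eq_zero h)
  have hsc : s < c := Nat.mod_lt _ hc
  have hmlt : a * m < c * (2 * a) := by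
    have h1 : a * m < a * (2 * c) := mul_lt_mul_of_pos_left hm2 ha
    calc a * m < a * (2 * c) := h1
    _ = c * (2 * a) := by ring
  have hqlt : q + 1 ≤ 2 * a := by
    have h1 : c * q < c * (2 * a) := by omega
    have := Nat.lt_of_mul_lt_mul_left h1
    omega
  have key : a * (2 * c - m) = c * (2 * a - q - 1) + (c - s) := by
    have h1 : a * (2 * c - m) + a * m = 2 * c * a := by
      rw [← Nat.mul_add, Nat.sub_add_cancel (by omega)]; ring
    zify [show m ≤ 2 * c by omega, show q ≤ 2 * a by omega, show 1 ≤ 2 * a - q by omega, show s ≤ c by omega] at h1 hqs ⊢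
    linear_combination h1 + hqs
  rw [key, Nat.mul_add_div hc, Nat.div_eq_of_lt (by omega)]
  omega

theorem eisenstein_jacobi (c : ℕ) : Odd c → ∀ m : ℕ, Odd m → Nat.Coprime m c →
    jacobiSym (m : ℤ) c = (-1) ^ Ei m c := by
  induction c using Nat.strong_induction_on with
  | _ c ih =>
  intro hodd m hmodd hcop
  rcases eq_or_ne c 1 with rfl | hc1
  · simp [Ei, jacobiSym.one_right]
  have hc0 : 0 < c := hodd.pos
  have hc3 : 3 ≤ c := by
    rcases hodd with ⟨t, ht⟩; omega
  -- the key case : m' < c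
  have key : ∀ m', m' < c → Odd m' → Nat.Coprime m' c →
      jacobiSym (m' : ℤ) c = (-1) ^ Ei m' c := by
    intro m' hlt hodd' hcop'
    have hm'pos : 0 < m' := hodd'.pos
    have hrec : Ei m' c + Ei c m' = c / 2 * (m' / 2) := by
      have := lattice_rec c m' hc0 hm'pos (Nat.Coprime.symm hcop')
      simpa [Ei, Nat.succ_eq_add_one] using this
    have hJ : jacobiSym (m' : ℤ) c = (-1) ^ (m' / 2 * (c / 2)) * jacobiSym (c : ℤ) m' :=
      jacobiSym.quadratic_reciprocity hodd' hodd
    have hIH : jacobiSym (c : ℤ) m' = (-1) ^ Ei c m' :=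
      ih m' hlt hodd' c hodd (Nat.Coprime.symm hcop')
    rw [hJ, hIH]
    have h2 : ((-1 : ℤ)) ^ (m' / 2 * (c / 2)) = (-1) ^ (Ei m' c + Ei c m') := by
      rw [hrec, mul_comm]
    rw [h2, pow_add, mul_assoc, ← pow_add]
    have : Even (Ei c m' + Ei c m') := ⟨Ei c m', rfl⟩
    rw [this.neg_one_pow, mul_one]
  -- reduce m modulo 2 * c
  set m₁ := m % (2 * c) with hm₁def
  have h2c : 0 < 2 * c := by omega
  have hm₁lt : m₁ < 2 * c := Nat.mod_lt _ h2c
  have hm₁odd : Odd m₁ := by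
    have h2 : m % (2 * c) % 2 = m % 2 := Nat.mod_mod_of_dvd m ⟨c, rfl⟩
    rw [Nat.odd_iff] at hmodd ⊢
    omega
  have hm₁cop : Nat.Coprime m₁ c := by
    have hd1 : Nat.gcd m₁ c ∣ m := by
      have h1 : Nat.gcd m₁ c ∣ m₁ := Nat.gcd_dvd_left _ _
      have h2 : Nat.gcd m₁ c ∣ 2 * c * (m / (2 * c)) :=
        Dvd.dvd.mul_right (Dvd.dvd.mul_left (Nat.gcd_dvd_right _ _) 2) _
      have h3 : m = m₁ + 2 * c * (m / (2 * c)) := by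
        rw [hm₁def]; exact (Nat.mod_add_div m (2 * c)).symm
      rw [h3]; exact Nat.dvd_add h1 h2
    have : Nat.gcd m₁ c ∣ Nat.gcd m c := Nat.dvd_gcd hd1 (Nat.gcd_dvd_right _ _)
    rw [hcop] at this
    exact Nat.dvd_one.mp this
  have hJ1 : jacobiSym (m : ℤ) c = jacobiSym (m₁ : ℤ) c := by
    apply jacobiSym.mod_left'
    have hmodc : m₁ % c = m % c := Nat.mod_mod_of_dvd m ⟨2, by ring⟩
    exact_mod_cast congrArg (fun x : ℕ => (x : ℤ)) hmodc.symm
  have hEpar : ((-1 : ℤ)) ^ Ei m c = (-1) ^ Ei m₁ c := by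
    set k := m / (2 * c) with hkdef
    have hterm : ∀ a ∈ Finset.Ico 1 (c / 2 + 1), a * m / c = a * m₁ / c + 2 * a * k := by
      intro a _
      have h3 : m = m₁ + 2 * c * k := by rw [hm₁def, hkdef]; exact (Nat.mod_add_div m (2 * c)).symm
      rw [h3, Nat.mul_add, show a * (2 * c * k) = 2 * a * k * c by ring,
        Nat.add_mul_div_right _ _ hc0]
    have hsum : Ei m c = Ei m₁ c + 2 * ∑ a ∈ Finset.Ico 1 (c / 2 + 1), a * k := by
      unfold Ei
      rw [Finset.sum_congr rfl hterm, Finset.sum_add_distrib, Finset.mul_sum]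
      congr 1
      exact Finset.sum_congr rfl fun a _ => by ring
    rw [hsum, pow_add]
    have : Even (2 * ∑ a ∈ Finset.Ico 1 (c / 2 + 1), a * k) := ⟨_, two_mul _⟩
    rw [this.neg_one_pow, mul_one]
  rw [hJ1, hEpar]
  have hm₁pos : 0 < m₁ := hm₁odd.pos
  rcases lt_or_ge m₁ c with hlt | hge
  · exact key m₁ hlt hm₁odd hm₁cop
  · have hne : m₁ ≠ c := by
      intro heq
      have h7 : Nat.Coprime c c := heq ▸ hm₁cop
      have h8 : c = 1 := by
        have := Nat.Coprime.gcd_eq_one h7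
        rwa [Nat.gcd_self] at this
      omega
    have hgt : c < m₁ := by omega
    set m₂ := 2 * c - m₁ with hm₂def
    have hm₂lt : m₂ < c := by omega
    have hm₂pos : 0 < m₂ := by omega
    have hm₂odd : Odd m₂ := by
      have h1odd := hm₁odd
      rw [Nat.odd_iff] at h1odd ⊢; omega
    have hm₂cop : Nat.Coprime m₂ c := by
      have hd1 : Nat.gcd m₂ c ∣ m₁ := by
        have h1 : Nat.gcd m₂ c ∣ m₂ := Nat.gcd_dvd_left _ _
        have h2 : Nat.gcd m₂ c ∣ 2 * c := Dvd.dvd.mul_left (Nat.gcd_dvd_right _ _) 2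
        have h3 : m₁ = 2 * c - m₂ := by omega
        rw [h3]; exact Nat.dvd_sub h2 h1
      have : Nat.gcd m₂ c ∣ Nat.gcd m₁ c := Nat.dvd_gcd hd1 (Nat.gcd_dvd_right _ _)
      rw [hm₁cop] at this
      exact Nat.dvd_one.mp this
    have hflip : Ei m₂ c + Ei m₁ c + c / 2 = ∑ a ∈ Finset.Ico 1 (c / 2 + 1), 2 * a := by
      have hterm : ∀ a ∈ Finset.Ico 1 (c / 2 + 1), a * m₂ / c + a * m₁ / c + 1 = 2 * a := by
        intro a ha
        simp only [Finset.mem_Ico] at ha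
        have hnd : ¬ c ∣ a * m₁ := by
          intro hdvd
          rw [mul_comm] at hdvd
          have h5 : c ∣ a := (Nat.Coprime.dvd_of_dvd_mul_left (Nat.Coprime.symm hm₁cop)) hdvd
          have := Nat.le_of_dvd (by omega) h5
          omega
        exact flip_term hc0 (by omega) hnd (by omega)
      calc Ei m₂ c + Ei m₁ c + c / 2
          = ∑ a ∈ Finset.Ico 1 (c / 2 + 1), (a * m₂ / c + a * m₁ / c + 1) := by
            unfold Ei
            rw [Finset.sum_add_distrib, Finset.sum_add_distrib, Finset.sum_const,
              Nat.card_Ico, smul_eq_mul, mul_one]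
            omega
        _ = _ := Finset.sum_congr rfl hterm
    have hJ2 : jacobiSym (m₁ : ℤ) c = (-1) ^ (c / 2) * jacobiSym (m₂ : ℤ) c := by
      have h1 : jacobiSym (m₁ : ℤ) c = jacobiSym (-(m₂ : ℤ)) c := by
        apply jacobiSym.mod_left'
        have h6 : -(m₂ : ℤ) = (m₁ : ℤ) + (c : ℤ) * (-2) := by
          have : (m₂ : ℤ) = 2 * c - m₁ := by
            rw [hm₂def]; push_cast [show m₁ ≤ 2 * c by omega]; ring
          rw [this]; ring
        rw [h6, Int.add_mul_emod_self_left]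
      rw [h1, show -(m₂ : ℤ) = -1 * (m₂ : ℤ) by ring, jacobiSym.mul_left]
      congr 1
      rw [jacobiSym.at_neg_one hodd, ZMod.χ₄_eq_neg_one_pow (Nat.odd_iff.mp hodd)]
    rw [hJ2, key m₂ hm₂lt hm₂odd hm₂cop]
    have hEvenSum : Even (∑ a ∈ Finset.Ico 1 (c / 2 + 1), 2 * a) := by
      rw [show (∑ a ∈ Finset.Ico 1 (c / 2 + 1), 2 * a)
          = 2 * ∑ a ∈ Finset.Ico 1 (c / 2 + 1), a from (Finset.mul_sum _ _ _).symm]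
      exact ⟨_, two_mul _⟩
    have h3 : ((-1 : ℤ)) ^ (c / 2 + Ei m₂ c) * (-1) ^ (Ei m₁ c) = 1 := by
      rw [← pow_add, show c / 2 + Ei m₂ c + Ei m₁ c
        = Ei m₂ c + Ei m₁ c + c / 2 by omega, hflip]
      exact hEvenSum.neg_one_pow
    have h4 : ((-1 : ℤ)) ^ (Ei m₁ c) * ((-1 : ℤ)) ^ (Ei m₁ c) = 1 := by
      rw [← pow_add]
      exact Even.neg_one_pow ⟨Ei m₁ c, rfl⟩
    calc ((-1 : ℤ)) ^ (c / 2) * (-1) ^ (Ei m₂ c)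
        = (-1) ^ (c / 2 + Ei m₂ c) := (pow_add _ _ _).symm
      _ = (-1) ^ (c / 2 + Ei m₂ c) * ((-1) ^ (Ei m₁ c) * (-1) ^ (Ei m₁ c)) := by
          rw [h4, mul_one]
      _ = ((-1) ^ (c / 2 + Ei m₂ c) * (-1) ^ (Ei m₁ c)) * (-1) ^ (Ei m₁ c) := by ring
      _ = (-1) ^ (Ei m₁ c) := by rw [h3, one_mul]

section PartOne

open Finset

variable {d : ℤ} {c : ℕ}

theorem neg_emod_eq {x : ℤ} {n : ℤ} (hn : 0 < n) (hx : x % n ≠ 0) :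
    (-x) % n = n - x % n := by
  have h1 : x = n * (x / n) + x % n := (Int.mul_ediv_add_emod x n).symm
  have h2 : -x = (n - x % n) + n * (-(x / n) - 1) := by linarith
  rw [h2, Int.add_mul_emod_self_left]
  have h3 : 0 ≤ x % n := Int.emod_nonneg x (by omega)
  have h4 : x % n < n := Int.emod_lt_of_pos x hn
  exact Int.emod_eq_of_lt (by omega) (by omega)

theorem sumsq (n : ℕ) : 6 * ∑ r ∈ Finset.range n, (r : ℤ) ^ 2
    = n * (n - 1) * (2 * n - 1) := by
  induction n with
  | zero => simp
  | succ n ihn =>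
    rw [Finset.sum_range_succ, mul_add, ihn]
    push_cast
    ring

theorem sum_Ico_int (c : ℕ) (hc : 0 < c) :
    2 * ∑ r ∈ Finset.Ico 1 c, (r : ℤ) = c * (c - 1) := by
  have h1 : (∑ r ∈ Finset.range c, r) * 2 = c * (c - 1) := Finset.sum_range_id_mul_two c
  have h2 : ∑ r ∈ Finset.range c, r = ∑ r ∈ Finset.Ico 1 c, r := by
    rw [Finset.range_eq_Ico, Finset.sum_eq_sum_Ico_succ_bot hc]
    simp
  have h3 : (1:ℕ) ≤ c := hc
  have := congrArg (fun x : ℕ => (x : ℤ)) h1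
  push_cast [h2, Nat.cast_sub h3] at this
  push_cast
  linarith

end PartOne
section PartTwo

open Finset

variable (d : ℤ) (c : ℕ)

/-- residues -/
def rho (d : ℤ) (c : ℕ) (r : ℕ) : ℤ := (d * r) % c

theorem rho_nonneg (hc : 0 < c) (r : ℕ) : 0 ≤ rho d c r :=
  Int.emod_nonneg _ (by exact_mod_cast hc.ne')

theorem rho_lt (hc : 0 < c) (r : ℕ) : rho d c r < c :=
  Int.emod_lt_of_pos _ (by exact_mod_cast hc)

theorem rho_ne_zero (hc : 0 < c) (hdc : Int.gcd d c = 1) {r : ℕ}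
    (hr : r ∈ Finset.Ico 1 c) : rho d c r ≠ 0 := by
  simp only [Finset.mem_Ico] at hr
  intro h
  have h1 : (c : ℤ) ∣ d * r := Int.dvd_of_emod_eq_zero h
  have h2 : IsCoprime (c : ℤ) d := by
    rw [Int.isCoprime_iff_gcd_eq_one, Int.gcd_comm]
    exact hdc
  have h3 : (c : ℤ) ∣ (r : ℤ) := h2.dvd_of_dvd_mul_left h1
  have h4 : (c : ℤ) ≤ r := Int.le_of_dvd (by exact_mod_cast hr.1) h3
  have : r < c := hr.2
  omega

theorem rho_pair (hc : 0 < c) (hdc : Int.gcd d c = 1) {r : ℕ}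
    (hr : r ∈ Finset.Ico 1 c) : rho d c (c - r) = c - rho d c r := by
  simp only [Finset.mem_Ico] at hr
  have h1 : ((c - r : ℕ) : ℤ) = (c : ℤ) - r := by
    push_cast [Nat.cast_sub hr.2.le]; ring
  have h2 : d * ((c - r : ℕ) : ℤ) = -(d * r) + (c : ℤ) * d := by rw [h1]; ring
  unfold rho
  rw [h2, Int.add_mul_emod_self_left]
  exact neg_emod_eq (by exact_mod_cast hc) (rho_ne_zero d c hc hdc (by simp [Finset.mem_Ico]; omega))

theorem sum_rho (hc : 0 < c) (hdc : Int.gcd d c = 1) :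
    2 * ∑ r ∈ Finset.Ico 1 c, rho d c r = c * (c - 1) := by
  have hrefl : ∑ r ∈ Finset.Ico 1 c, rho d c (c - r) = ∑ r ∈ Finset.Ico 1 c, rho d c r := by
    refine Finset.sum_nbij' (fun r => c - r) (fun r => c - r) ?_ ?_ ?_ ?_ ?_
    · intro a ha; simp only [Finset.mem_Ico] at *; omega
    · intro a ha; simp only [Finset.mem_Ico] at *; omega
    · intro a ha; simp only [Finset.mem_Ico] at ha; omega
    · intro a ha; simp only [Finset.mem_Ico] at ha; omega
    · intro a ha; rfl
  have hsum : ∑ r ∈ Finset.Ico 1 c, (rho d c r + rho d c (c - r))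
      = ∑ r ∈ Finset.Ico 1 c, (c : ℤ) := by
    apply Finset.sum_congr rfl
    intro r hr
    rw [rho_pair d c hc hdc hr]
    ring
  rw [Finset.sum_add_distrib, hrefl] at hsum
  rw [Finset.sum_const, Nat.card_Ico] at hsum
  have : ((c - 1 : ℕ) : ℤ) = (c : ℤ) - 1 := by push_cast [Nat.cast_sub hc]; ring
  rw [nsmul_eq_mul, this] at hsum
  linarith

end PartTwo
section PartThree

open Finset

theorem saw_nat (c : ℕ) (hc : 0 < c) {r : ℕ} (hr : r ∈ Finset.Ico 1 c) :
    saw ((r : ℝ) / (c : ℝ)) = (r : ℝ) / c - 1 / 2 := by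
  simp only [Finset.mem_Ico] at hr
  have hcR : (0 : ℝ) < c := by exact_mod_cast hc
  have h1 : (0 : ℝ) ≤ (r : ℝ) / c := by positivity
  have h2 : (r : ℝ) / c < 1 := by
    rw [div_lt_one hcR]; exact_mod_cast hr.2
  have hfr : Int.fract ((r : ℝ) / c) = (r : ℝ) / c :=
    Int.fract_eq_self.mpr ⟨h1, h2⟩
  have hne : Int.fract ((r : ℝ) / c) ≠ 0 := by
    rw [hfr]
    have : (0 : ℝ) < (r : ℝ) / c := by
      apply div_pos _ hcR
      exact_mod_cast hr.1
    linarith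
  have hfl : ⌊(r : ℝ) / c⌋ = 0 := by
    rw [Int.floor_eq_zero_iff]
    exact ⟨h1, h2⟩
  rw [saw, if_neg hne, hfl]
  norm_num

theorem saw_rho (d : ℤ) (c : ℕ) (hc : 0 < c) (hdc : Int.gcd d c = 1) {r : ℕ}
    (hr : r ∈ Finset.Ico 1 c) :
    saw ((d : ℝ) * (r : ℝ) / (c : ℝ)) = (rho d c r : ℝ) / c - 1 / 2 := by
  have hcR : (0 : ℝ) < c := by exact_mod_cast hc
  set q : ℤ := d * r / c with hq
  have hde : d * (r : ℤ) = c * q + rho d c r := by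
    rw [hq]; exact (Int.mul_ediv_add_emod _ _).symm
  have hkey : (d : ℝ) * r / c = (q : ℝ) + (rho d c r : ℝ) / c := by
    have : (d : ℝ) * r = (c : ℝ) * q + (rho d c r : ℝ) := by exact_mod_cast hde
    field_simp [this]
    linarith
  have h0 : (0 : ℝ) ≤ (rho d c r : ℝ) / c := by
    apply div_nonneg _ hcR.le
    exact_mod_cast rho_nonneg d c hc r
  have h1 : (rho d c r : ℝ) / c < 1 := by
    rw [div_lt_one hcR]
    exact_mod_cast rho_lt d c hc r
  have hpos : (0 : ℝ) < (rho d c r : ℝ) / c := by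
    apply div_pos _ hcR
    have := rho_ne_zero d c hc hdc hr
    have := rho_nonneg d c hc r
    have : (0:ℤ) < rho d c r := by omega
    exact_mod_cast this
  have hfr : Int.fract ((d : ℝ) * r / c) = (rho d c r : ℝ) / c := by
    rw [hkey, Int.fract_intCast_add, Int.fract_eq_self.mpr ⟨h0, h1⟩]
  have hne : Int.fract ((d : ℝ) * r / c) ≠ 0 := by rw [hfr]; linarith
  have hfl : ⌊(d : ℝ) * r / c⌋ = q := by
    rw [hkey, Int.floor_intCast_add, Int.floor_eq_zero_iff.mpr ⟨h0, h1⟩, add_zero]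
  rw [saw, if_neg hne, hfl, hkey]
  ring

theorem ded_eval (d : ℤ) (c : ℕ) (hc : 0 < c) (hdc : Int.gcd d c = 1) :
    dedekindSum d (c : ℤ) =
      ∑ r ∈ Finset.Ico 1 c, ((r : ℝ) / c - 1 / 2) * ((rho d c r : ℝ) / c - 1 / 2) := by
  unfold dedekindSum
  rw [Int.toNat_natCast, Finset.range_eq_Ico, Finset.sum_eq_sum_Ico_succ_bot hc]
  have hsaw0 : saw 0 = 0 := by simp [saw]
  simp only [Nat.cast_zero, zero_div, hsaw0, zero_mul, zero_add]
  apply Finset.sum_congr rfl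
  intro r hr
  have h1 : (((c : ℤ)) : ℝ) = (c : ℝ) := by push_cast; rfl
  rw [h1, saw_nat c hc hr, saw_rho d c hc hdc hr]

theorem int_eval (d : ℤ) (c : ℕ) (hc : 0 < c) (hdc : Int.gcd d c = 1) :
    ∑ r ∈ Finset.Ico 1 c, (12 * (r : ℤ) * rho d c r - 6 * c * r - 6 * c * rho d c r
        + 3 * (c : ℤ) ^ 2)
      = 12 * (∑ r ∈ Finset.Ico 1 c, (r : ℤ) * rho d c r) - 3 * (c : ℤ) ^ 2 * (c - 1) := by
  have hr2 := sum_Ico_int c hc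
  have hrho2 := sum_rho d c hc hdc
  have hcard : ((Finset.Ico 1 c).card : ℤ) = (c : ℤ) - 1 := by
    rw [Nat.card_Ico]; push_cast [Nat.cast_sub hc]; ring
  have h0 : ∀ r ∈ Finset.Ico 1 c, (12 * (r : ℤ) * rho d c r - 6 * c * r - 6 * c * rho d c r
        + 3 * (c : ℤ) ^ 2)
      = 12 * ((r : ℤ) * rho d c r) - (6 * (c:ℤ)) * (r : ℤ) - (6 * (c:ℤ)) * (rho d c r)
        + 3 * (c : ℤ) ^ 2 := fun r _ => by ring
  rw [Finset.sum_congr rfl h0, Finset.sum_add_distrib, Finset.sum_sub_distrib,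
    Finset.sum_sub_distrib, ← Finset.mul_sum, ← Finset.mul_sum, ← Finset.mul_sum,
    Finset.sum_const, nsmul_eq_mul, hcard]
  linear_combination (-3*(c:ℤ)) * hr2 - 3*(c:ℤ) * hrho2

theorem real_eval (d : ℤ) (c : ℕ) (hc : 0 < c) (hdc : Int.gcd d c = 1) :
    (c : ℝ) * (((12 * (c : ℤ) : ℤ)) : ℝ) * dedekindSum d (c : ℤ) =
      ((12 * (∑ r ∈ Finset.Ico 1 c, (r : ℤ) * rho d c r) - 3 * (c : ℤ) ^ 2 * (c - 1) : ℤ) : ℝ) := by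
  have hcR : (0 : ℝ) < c := by exact_mod_cast hc
  rw [ded_eval d c hc hdc, ← int_eval d c hc hdc]
  rw [mul_assoc, Finset.mul_sum, Finset.mul_sum]
  push_cast
  apply Finset.sum_congr rfl
  intro r hr
  field_simp
  ring

theorem dvd_key (d : ℤ) (c : ℕ) (hc : 0 < c) (hdc : Int.gcd d c = 1) :
    (c : ℤ) ∣ 12 * (∑ r ∈ Finset.Ico 1 c, (r : ℤ) * rho d c r) - 3 * (c : ℤ) ^ 2 * (c - 1) := by
  have h1 : (c : ℤ) ∣ ∑ r ∈ Finset.Ico 1 c, (r : ℤ) * rho d c r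
      - d * ∑ r ∈ Finset.Ico 1 c, (r : ℤ) ^ 2 := by
    rw [Finset.mul_sum, ← Finset.sum_sub_distrib]
    apply Finset.dvd_sum
    intro r _
    have h2 : rho d c r - d * r = -((c : ℤ) * (d * r / c)) := by
      have := Int.mul_ediv_add_emod (d * r) (c : ℤ)
      unfold rho
      linarith
    have h3 : (r : ℤ) * rho d c r - d * (r : ℤ) ^ 2 = (r : ℤ) * (rho d c r - d * r) := by ring
    rw [h3, h2]
    exact Dvd.dvd.mul_left ⟨-(d * r / c), by ring⟩ _
  have h4 : (c : ℤ) ∣ 12 * ∑ r ∈ Finset.Ico 1 c, (r : ℤ) ^ 2 := by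
    have h5 : ∑ r ∈ Finset.Ico 1 c, (r : ℤ) ^ 2 = ∑ r ∈ Finset.range c, (r : ℤ) ^ 2 := by
      rw [Finset.range_eq_Ico, Finset.sum_eq_sum_Ico_succ_bot hc]
      norm_num
    have h6 := sumsq c
    refine ⟨2 * (c - 1) * (2 * c - 1), ?_⟩
    rw [h5]
    linarith
  have h7 : (c : ℤ) ∣ 3 * (c:ℤ) ^ 2 * (c - 1) := ⟨3 * c * (c-1), by ring⟩
  have h8 : 12 * (∑ r ∈ Finset.Ico 1 c, (r : ℤ) * rho d c r) - 3 * (c : ℤ) ^ 2 * (c - 1)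
      = 12 * (∑ r ∈ Finset.Ico 1 c, (r : ℤ) * rho d c r - d * ∑ r ∈ Finset.Ico 1 c, (r : ℤ) ^ 2)
        + d * (12 * ∑ r ∈ Finset.Ico 1 c, (r : ℤ) ^ 2) - 3 * (c : ℤ) ^ 2 * (c - 1) := by ring
  rw [h8]
  exact dvd_sub (dvd_add (Dvd.dvd.mul_left h1 12) (Dvd.dvd.mul_left h4 d)) h7

end PartThree
section PartFour

open Finset

theorem natCast_zmod2 (n : ℕ) : ((n : ℕ) : ZMod 2) = ((n : ℤ) : ZMod 2) := by push_cast; rfl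

theorem zmod2_term : ∀ R Q : ZMod 2, R * (R - Q) + (1 - R) * (1 - (R - Q)) = 1 + Q := by decide

theorem S_parity (d : ℤ) (c : ℕ) (hc3 : 3 ≤ c) (hodd : Odd c) (hdc : Int.gcd d c = 1)
    (m : ℕ) (hmodd : Odd m) (hmd : ((m : ℕ) : ℤ) % c = d % c) :
    ((∑ r ∈ Finset.Ico 1 c, (r : ℤ) * rho d c r : ℤ) : ZMod 2)
      = ((c / 2 : ℕ) : ZMod 2) + ((Ei m c : ℕ) : ZMod 2) := by
  have hc0 : 0 < c := by omega
  have hcmod : c % 2 = 1 := Nat.odd_iff.mp hodd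
  have hmmod : m % 2 = 1 := Nat.odd_iff.mp hmodd
  set u := c / 2 with hu
  have huc : c = 2 * u + 1 := by omega
  have hc2 : ((c : ℕ) : ZMod 2) = 1 := by rw [← ZMod.natCast_mod, hcmod]; rfl
  have hm2 : ((m : ℕ) : ZMod 2) = 1 := by rw [← ZMod.natCast_mod, hmmod]; rfl
  have hq : ∀ r : ℕ, (m : ℤ) * r = c * ((m : ℤ) * r / c) + rho d c r := by
    intro r
    have h1 : ((m : ℤ) * r) % c = (d * r) % c := Int.ModEq.mul_right r hmd
    unfold rho
    rw [← h1]
    exact (Int.mul_ediv_add_emod _ _).symm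
  have hsplit : ∑ r ∈ Finset.Ico 1 c, (r : ℤ) * rho d c r
      = ∑ r ∈ Finset.Ico 1 (u + 1), (r : ℤ) * rho d c r
        + ∑ r ∈ Finset.Ico (u + 1) c, (r : ℤ) * rho d c r :=
    (Finset.sum_Ico_consecutive _ (by omega) (by omega)).symm
  have hrefl : ∑ r ∈ Finset.Ico (u + 1) c, (r : ℤ) * rho d c r
      = ∑ r ∈ Finset.Ico 1 (u + 1), ((c - r : ℕ) : ℤ) * rho d c (c - r) := by
    refine Finset.sum_nbij' (fun r => c - r) (fun r => c - r) ?_ ?_ ?_ ?_ ?_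
    · intro a ha; simp only [Finset.mem_Ico] at *; omega
    · intro a ha; simp only [Finset.mem_Ico] at *; omega
    · intro a ha; simp only [Finset.mem_Ico] at ha; omega
    · intro a ha; simp only [Finset.mem_Ico] at ha; omega
    · intro a ha
      simp only [Finset.mem_Ico] at ha
      have h2 : c - (c - a) = a := by omega
      simp only [h2]
  have hterm : ∀ r ∈ Finset.Ico 1 (u + 1),
      (((r : ℤ) * rho d c r + ((c - r : ℕ) : ℤ) * rho d c (c - r) : ℤ) : ZMod 2)
      = 1 + (((m : ℤ) * r / c : ℤ) : ZMod 2) := by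
    intro r hr
    simp only [Finset.mem_Ico] at hr
    have hrIco : r ∈ Finset.Ico 1 c := by simp only [Finset.mem_Ico]; omega
    have hpair := rho_pair d c hc0 hdc hrIco
    have h3 : rho d c r = (m : ℤ) * r - c * ((m : ℤ) * r / c) := by
      have := hq r; linarith
    have hP : ((rho d c r : ℤ) : ZMod 2)
        = (r : ZMod 2) - (((m : ℤ) * r / c : ℤ) : ZMod 2) := by
      rw [h3]
      push_cast
      rw [hm2, hc2]
      ring
    have hc_subcast : ((c - r : ℕ) : ℤ) = (c : ℤ) - r := by
      push_cast [Nat.cast_sub (by omega : r ≤ c)]; ring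
    rw [hpair, hc_subcast]
    push_cast
    rw [hm2, hc2] at *
    rw [hP]
    have := zmod2_term (r : ZMod 2) (((m : ℤ) * r / c : ℤ) : ZMod 2)
    linear_combination this
  have hEi : ((Ei m c : ℕ) : ZMod 2)
      = ∑ r ∈ Finset.Ico 1 (u + 1), (((m : ℤ) * r / c : ℤ) : ZMod 2) := by
    unfold Ei
    push_cast
    apply Finset.sum_congr rfl
    intro a ha
    have h4 : ((a * m / c : ℕ) : ℤ) = (m : ℤ) * a / c := by
      rw [Int.natCast_div]
      push_cast
      rw [mul_comm]
    calc ((a * m / c : ℕ) : ZMod 2) = (((a * m / c : ℕ) : ℤ) : ZMod 2) := natCast_zmod2 _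
      _ = (((m : ℤ) * a / c : ℤ) : ZMod 2) := by rw [h4]
  rw [hsplit, hrefl, ← Finset.sum_add_distrib]
  push_cast
  rw [Finset.sum_congr rfl (fun r hr => by
    have := hterm r hr
    push_cast at this
    exact this)]
  rw [Finset.sum_add_distrib, Finset.sum_const, Nat.card_Ico]
  rw [hEi]
  simp

theorem S_parity' (d : ℤ) (c : ℕ) (hc3 : 3 ≤ c) (hodd : Odd c) (hdc : Int.gcd d c = 1)
    (m : ℕ) (hmodd : Odd m) (hmd : ((m : ℕ) : ℤ) % c = d % c) :
    ∃ w : ℤ, (∑ r ∈ Finset.Ico 1 c, (r : ℤ) * rho d c r)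
      = ((c / 2 : ℕ) : ℤ) + ((Ei m c : ℕ) : ℤ) + 2 * w := by
  have hz := S_parity d c hc3 hodd hdc m hmodd hmd
  have h0 : (((∑ r ∈ Finset.Ico 1 c, (r : ℤ) * rho d c r)
      - (((c / 2 : ℕ) : ℤ) + ((Ei m c : ℕ) : ℤ)) : ℤ) : ZMod 2) = 0 := by
    rw [Int.cast_sub, Int.cast_add, Int.cast_natCast, Int.cast_natCast, hz]
    ring
  rw [ZMod.intCast_zmod_eq_zero_iff_dvd] at h0
  obtain ⟨w, hw⟩ := h0
  refine ⟨w, ?_⟩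
  have h2 : ((2 : ℕ) : ℤ) = 2 := by norm_num
  rw [h2] at hw
  linarith

end PartFour
end DedAux
theorem twelve_c_dedekindSum_mod_eight (d : ℤ) (c : ℕ) (hc : 0 < c) (hodd : Odd c)
    (hdc : Int.gcd d c = 1) :
    ∃ k : ℤ, ((12 * c : ℤ) : ℝ) * dedekindSum d c = (k : ℝ) ∧
      k ≡ c + 1 - 2 * jacobiSym d c [ZMOD 8] := by
  rcases eq_or_ne c 1 with rfl | hc1
  · refine ⟨0, ?_, ?_⟩
    · have h0 : dedekindSum d ((1 : ℕ) : ℤ) = 0 := by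
        unfold dedekindSum
        norm_num [saw]
      rw [h0]
      norm_num
    · rw [jacobiSym.one_right]
      decide
  have hcmod : c % 2 = 1 := Nat.odd_iff.mp hodd
  have hc3 : 3 ≤ c := by omega
  have hc0 : 0 < c := hc
  set S := ∑ r ∈ Finset.Ico 1 c, (r : ℤ) * DedAux.rho d c r with hSdef
  obtain ⟨k, hk⟩ := DedAux.dvd_key d c hc0 hdc
  refine ⟨k, ?_, ?_⟩
  · -- real part
    have hre := DedAux.real_eval d c hc0 hdc
    rw [← hSdef] at hre
    rw [hk] at hre
    have hcR : ((c : ℕ) : ℝ) ≠ 0 := by positivity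
    apply mul_left_cancel₀ hcR
    rw [← mul_assoc]
    rw [hre]
    push_cast
    ring
  · -- congruence part
    set u := c / 2 with hudef
    -- choose the odd representative m
    set e₀ := (d % c).toNat with he₀def
    have hd0 : 0 ≤ d % c := Int.emod_nonneg d (by exact_mod_cast hc0.ne')
    have he₀ : ((e₀ : ℕ) : ℤ) = d % c := Int.toNat_of_nonneg hd0
    have he₀lt : e₀ < c := by
      have : d % c < c := Int.emod_lt_of_pos d (by exact_mod_cast hc0)
      omega
    have he₀pos : 0 < e₀ := by
      rcases Nat.eq_zero_or_pos e₀ with h | h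
      · exfalso
        have h1 : d % c = 0 := by omega
        have h2 : (c : ℤ) ∣ d := Int.dvd_of_emod_eq_zero h1
        have h3 : (c : ℤ) ∣ (Int.gcd d c : ℤ) := Int.dvd_coe_gcd h2 dvd_rfl
        rw [hdc] at h3
        have : (c : ℤ) ≤ 1 := Int.le_of_dvd one_pos h3
        omega
      · exact h
    set m := if e₀ % 2 = 1 then e₀ else e₀ + c with hmdef
    have hm_odd : Odd m := by
      rw [Nat.odd_iff, hmdef]
      split <;> omega
    have hm_mod : ((m : ℕ) : ℤ) % c = d % c := by
      have base : ((e₀ : ℕ) : ℤ) % c = d % c := by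
        rw [he₀]
        exact Int.emod_emod_of_dvd d dvd_rfl
      rw [hmdef]
      split
      · exact base
      · push_cast
        rw [show ((e₀ : ℤ) + c) = (e₀ : ℤ) + (c : ℤ) * 1 by ring, Int.add_mul_emod_self_left]
        exact base
    have hm_cop : Nat.Coprime m c := by
      have hg1 : ((Nat.gcd m c : ℕ) : ℤ) ∣ (m : ℤ) := Int.natCast_dvd_natCast.mpr (Nat.gcd_dvd_left _ _)
      have hg2 : ((Nat.gcd m c : ℕ) : ℤ) ∣ (c : ℤ) := Int.natCast_dvd_natCast.mpr (Nat.gcd_dvd_right _ _)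
      have hdm : d = (m : ℤ) - (c : ℤ) * ((m : ℤ) / c) + (c : ℤ) * (d / c) := by
        have h1 : (m : ℤ) % c = (m : ℤ) - c * ((m : ℤ) / c) := by
          have := Int.mul_ediv_add_emod (m : ℤ) c; linarith
        have h2 : d % c = d - c * (d / c) := by
          have := Int.mul_ediv_add_emod d (c : ℤ); linarith
        rw [h1, h2] at hm_mod
        linarith
      have hg3 : ((Nat.gcd m c : ℕ) : ℤ) ∣ d := by
        rw [hdm]
        exact dvd_add (dvd_sub hg1 (Dvd.dvd.mul_right hg2 _)) (Dvd.dvd.mul_right hg2 _)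
      have hg4 : ((Nat.gcd m c : ℕ) : ℤ) ∣ (Int.gcd d c : ℤ) := Int.dvd_coe_gcd hg3 hg2
      rw [hdc] at hg4
      have : Nat.gcd m c ∣ 1 := by exact_mod_cast hg4
      exact Nat.dvd_one.mp this
    -- jacobi symbol in terms of Eisenstein sum
    have hJ : jacobiSym d c = (-1) ^ DedAux.Ei m c := by
      have h1 : jacobiSym ((m : ℕ) : ℤ) c = jacobiSym d c := jacobiSym.mod_left' hm_mod
      rw [← h1]
      exact DedAux.eisenstein_jacobi c hodd m hm_odd hm_cop
    -- parity of S
    obtain ⟨w, hS8⟩ := DedAux.S_parity' d c hc3 hodd hdc m hm_odd hm_mod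
    rw [← hSdef] at hS8
    -- the ZMod 8 computation
    have huc : (c : ℤ) = 2 * (u : ℤ) + 1 := by
      have : c = 2 * u + 1 := by omega
      exact_mod_cast congrArg (fun x : ℕ => (x : ℤ)) this
    obtain ⟨v, hv⟩ := Int.even_mul_succ_self (u : ℤ)
    have hc2 : (c : ℤ) ^ 2 = 1 + 8 * v := by rw [huc]; linear_combination 4 * hv
    have hi : k = (12 * S - 3 * (c : ℤ) ^ 2 * ((c : ℤ) - 1)) * (c : ℤ) - 8 * (v * k) := by
      linear_combination (-(c : ℤ)) * hk - k * hc2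
    suffices hgoal : ((k : ℤ) : ZMod 8) = ((c + 1 - 2 * jacobiSym d c : ℤ) : ZMod 8) by
      have := (ZMod.intCast_eq_intCast_iff _ _ _).mp hgoal
      exact_mod_cast this
    rw [hJ]
    rw [hS8, huc] at hi
    rcases Nat.even_or_odd (DedAux.Ei m c) with ⟨e, he⟩ | ⟨e, he⟩
    · have hj1 : ((-1 : ℤ)) ^ (DedAux.Ei m c) = 1 := Even.neg_one_pow ⟨e, he⟩
      rw [hj1]
      have hEcast : (DedAux.Ei m c : ℤ) = (e : ℤ) + e := by exact_mod_cast he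
      rw [hEcast] at hi
      rw [hi, huc]
      push_cast
      have key8 : ∀ U E W V : ZMod 8,
          (12 * (U + (E + E) + 2 * W) - 3 * (2 * U + 1) ^ 2 * ((2 * U + 1) - 1)) * (2 * U + 1)
            - 8 * V = (2 * U + 1) + 1 - 2 * 1 := by decide
      exact key8 _ _ _ _
    · have hj1 : ((-1 : ℤ)) ^ (DedAux.Ei m c) = -1 := Odd.neg_one_pow ⟨e, he⟩
      rw [hj1]
      have hEcast : (DedAux.Ei m c : ℤ) = 2 * (e : ℤ) + 1 := by exact_mod_cast he
      rw [hEcast] at hi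
      rw [hi, huc]
      push_cast
      have key8 : ∀ U E W V : ZMod 8,
          (12 * (U + (2 * E + 1) + 2 * W) - 3 * (2 * U + 1) ^ 2 * ((2 * U + 1) - 1)) * (2 * U + 1)
            - 8 * V = (2 * U + 1) + 1 - 2 * (-1) := by decide
      exact key8 _ _ _ _
end
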